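/- arXiv:2301.02389 — 3 statements merged into one kernel-verified Lean document; each statement's English description precedes it below -/
import Mathlib

section
/- For any initial state s₁ with V_c^*(s₁) = 0 and any Markovian policy π, the expected number of times π takes an action outside the restricted action set 𝒜̄ (where 𝒜̄_s = {a : Q_c^*(s,a) ≤ V_c^*(s)}) starting from s₁ is zero if and only if V_c^π(s₁) = 0. -/
open Finset

/-- Expected sum of the per-step functions `f` (indexed by the number of remaining
steps) along trajectories generated by policy `π` under dynamics `P`. -/
noncomputable def EV {S A : Type*} [Fintype S] [Fintype A]
    (P : S → A → S → ℝ) (π : ℕ → S → A → ℝ) (f : ℕ → S → A → ℝ) :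
    ℕ → S → ℝ
  | 0, _ => 0
  | n + 1, s =>
      ∑ a, π (n + 1) s a * (f (n + 1) s a + ∑ s', P s a s' * EV P π f n s')

/-- State-action value (cost-to-go) of a policy, with `n` remaining steps. -/
noncomputable def Qval {S A : Type*} [Fintype S] [Fintype A]
    (P : S → A → S → ℝ) (c : ℕ → S → A → ℝ) (π : ℕ → S → A → ℝ) :
    ℕ → S → A → ℝ
  | 0, _, _ => 0
  | n + 1, s, a => c (n + 1) s a + ∑ s', P s a s' * EV P π c n s'

/-- `P` is a stochastic transition kernel. -/
def StochMat {S A : Type*} [Fintype S] (P : S → A → S → ℝ) : Prop :=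
  ∀ s a, (∀ s', 0 ≤ P s a s') ∧ ∑ s', P s a s' = 1

/-- `π` is a (Markovian, possibly time-dependent) stochastic policy. -/
def StochPol {S A : Type*} [Fintype A] (π : ℕ → S → A → ℝ) : Prop :=
  ∀ n s, (∀ a, 0 ≤ π n s a) ∧ ∑ a, π n s a = 1

lemma EV_nonneg {S A : Type*} [Fintype S] [Fintype A]
    (P : S → A → S → ℝ) (π : ℕ → S → A → ℝ) (f : ℕ → S → A → ℝ)
    (hP : StochMat P) (hπ : StochPol π) (hf : ∀ n s a, 0 ≤ f n s a) :
    ∀ n s, 0 ≤ EV P π f n s := by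
  intro n
  induction n with
  | zero => intro s; simp [EV]
  | succ n ih =>
      intro s
      apply Finset.sum_nonneg
      intro a _
      exact mul_nonneg ((hπ (n+1) s).1 a)
        (add_nonneg (hf (n+1) s a)
          (Finset.sum_nonneg fun s' _ => mul_nonneg ((hP s a).1 s') (ih s')))

/-- For any initial state `s₁` with `V_c^*(s₁) = 0` and any Markovian
policy `π`, the expected number of times `π` takes an action outside the restricted
action set `𝒜̄_s = {a : Q_c^*(s,a) ≤ V_c^*(s)}` starting from `s₁` is zero iff
`V_c^π(s₁) = 0`. -/
theorem restricted_policy_iff_zero_cost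
    {S A : Type*} [Fintype S] [Fintype A]
    (P : S → A → S → ℝ) (c : ℕ → S → A → ℝ) (H : ℕ)
    (Vstar : ℕ → S → ℝ) (Qstar : ℕ → S → A → ℝ)
    (hP : StochMat P)
    (hc : ∀ n s a, 0 ≤ c n s a)
    (hV : ∀ n s, IsLeast {x : ℝ | ∃ π, StochPol π ∧ x = EV P π c n s} (Vstar n s))
    (hQ : ∀ n s a,
      IsLeast {x : ℝ | ∃ π, StochPol π ∧ x = Qval P c π n s a} (Qstar n s a))
    (π : ℕ → S → A → ℝ) (hπ : StochPol π)
    (s₁ : S) (hs₁ : Vstar H s₁ = 0) :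
    EV P π (fun n s a => if Qstar n s a ≤ Vstar n s then 0 else 1) H s₁ = 0 ↔
      EV P π c H s₁ = 0 := by
  set g : ℕ → S → A → ℝ := fun n s a => if Qstar n s a ≤ Vstar n s then 0 else 1 with hg
  have hgnn : ∀ n s a, 0 ≤ g n s a := by
    intro n s a; simp only [hg]; split <;> norm_num
  have hEVg : ∀ n s, 0 ≤ EV P π g n s := EV_nonneg P π g hP hπ hgnn
  have hEVc : ∀ n s, 0 ≤ EV P π c n s := EV_nonneg P π c hP hπ hc
  have hVnn : ∀ n s, 0 ≤ Vstar n s := by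
    intro n s
    obtain ⟨π₀, hπ₀, h⟩ := (hV n s).1
    rw [h]; exact EV_nonneg P π₀ c hP hπ₀ hc n s
  have hVle : ∀ n s, Vstar n s ≤ EV P π c n s := fun n s => (hV n s).2 ⟨π, hπ, rfl⟩
  have hQle : ∀ n s a, Qstar n s a ≤ Qval P c π n s a :=
    fun n s a => (hQ n s a).2 ⟨π, hπ, rfl⟩
  have hQge : ∀ n s a,
      c (n+1) s a + ∑ s', P s a s' * Vstar n s' ≤ Qstar (n+1) s a := by
    intro n s a
    obtain ⟨π₀, hπ₀, h⟩ := (hQ (n+1) s a).1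
    rw [h]
    show _ ≤ c (n+1) s a + ∑ s', P s a s' * EV P π₀ c n s'
    refine add_le_add le_rfl (Finset.sum_le_sum fun s' _ => ?_)
    exact mul_le_mul_of_nonneg_left ((hV n s').2 ⟨π₀, hπ₀, rfl⟩) ((hP s a).1 s')
  suffices h : ∀ n s, Vstar n s = 0 → (EV P π g n s = 0 ↔ EV P π c n s = 0) from
    h H s₁ hs₁
  intro n
  induction n with
  | zero => intro s _; simp [EV]
  | succ n ih =>
      intro s hVs
      have hterm : ∀ (f : ℕ → S → A → ℝ), (∀ n s a, 0 ≤ f n s a) →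
          (∀ n s, 0 ≤ EV P π f n s) →
          (EV P π f (n+1) s = 0 ↔ ∀ a,
            π (n+1) s a * (f (n+1) s a + ∑ s', P s a s' * EV P π f n s') = 0) := by
        intro f hf hEVf
        show (∑ a, _ = 0) ↔ _
        rw [Finset.sum_eq_zero_iff_of_nonneg]
        · simp
        · intro a _
          exact mul_nonneg ((hπ (n+1) s).1 a)
            (add_nonneg (hf (n+1) s a)
              (Finset.sum_nonneg fun s' _ => mul_nonneg ((hP s a).1 s') (hEVf n s')))
      rw [hterm g hgnn hEVg, hterm c hc hEVc]
      constructor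
      · intro h0 a
        rcases eq_or_lt_of_le ((hπ (n+1) s).1 a) with hpa | hpa
        · rw [← hpa, zero_mul]
        have h1 := h0 a
        rw [mul_eq_zero] at h1
        rcases h1 with h1 | h1; · exact absurd h1 hpa.ne'
        have hsum_nn : 0 ≤ ∑ s', P s a s' * EV P π g n s' :=
          Finset.sum_nonneg fun s' _ => mul_nonneg ((hP s a).1 s') (hEVg n s')
        obtain ⟨hga, hsg⟩ := (add_eq_zero_iff_of_nonneg (hgnn (n+1) s a) hsum_nn).1 h1
        -- g = 0 means Qstar ≤ Vstar = 0
        have hQs0 : Qstar (n+1) s a ≤ 0 := by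
          by_contra hcon
          have : g (n+1) s a = 1 := by
            simp only [hg]; rw [hVs, if_neg hcon]
          rw [this] at hga; norm_num at hga
        -- hence c + ∑ P Vstar ≤ 0, both nonneg
        have hkey := le_trans (hQge n s a) hQs0
        have hsumV_nn : 0 ≤ ∑ s', P s a s' * Vstar n s' :=
          Finset.sum_nonneg fun s' _ => mul_nonneg ((hP s a).1 s') (hVnn n s')
        have hca : c (n+1) s a = 0 := le_antisymm
          (by linarith) (hc (n+1) s a)
        have hsumV : ∑ s', P s a s' * Vstar n s' = 0 := le_antisymm
          (by linarith) hsumV_nn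
        rw [Finset.sum_eq_zero_iff_of_nonneg
          (fun s' _ => mul_nonneg ((hP s a).1 s') (hVnn n s'))] at hsumV
        rw [Finset.sum_eq_zero_iff_of_nonneg
          (fun s' _ => mul_nonneg ((hP s a).1 s') (hEVg n s'))] at hsg
        rw [hca, zero_add]
        have : ∑ s', P s a s' * EV P π c n s' = 0 := by
          apply Finset.sum_eq_zero
          intro s' _
          rcases eq_or_lt_of_le ((hP s a).1 s') with hps | hps
          · rw [← hps, zero_mul]
          have hVs' : Vstar n s' = 0 := by
            have := hsumV s' (Finset.mem_univ s')
            rcases mul_eq_zero.1 this with h' | h'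
            · exact absurd h' hps.ne'
            · exact h'
          have hEVgs' : EV P π g n s' = 0 := by
            have := hsg s' (Finset.mem_univ s')
            rcases mul_eq_zero.1 this with h' | h'
            · exact absurd h' hps.ne'
            · exact h'
          rw [(ih s' hVs').1 hEVgs', mul_zero]
        rw [this, mul_zero]
      · intro h0 a
        rcases eq_or_lt_of_le ((hπ (n+1) s).1 a) with hpa | hpa
        · rw [← hpa, zero_mul]
        have h1 := h0 a
        rw [mul_eq_zero] at h1
        rcases h1 with h1 | h1; · exact absurd h1 hpa.ne'
        have hsum_nn : 0 ≤ ∑ s', P s a s' * EV P π c n s' :=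
          Finset.sum_nonneg fun s' _ => mul_nonneg ((hP s a).1 s') (hEVc n s')
        obtain ⟨hca, hsc⟩ := (add_eq_zero_iff_of_nonneg (hc (n+1) s a) hsum_nn).1 h1
        rw [Finset.sum_eq_zero_iff_of_nonneg
          (fun s' _ => mul_nonneg ((hP s a).1 s') (hEVc n s'))] at hsc
        -- Qstar ≤ Qval = c + ∑ P EVc = 0
        have hQval0 : Qval P c π (n+1) s a = 0 := by
          show c (n+1) s a + ∑ s', P s a s' * EV P π c n s' = 0
          rw [hca, zero_add]
          apply Finset.sum_eq_zero
          intro s' _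
          rcases eq_or_lt_of_le ((hP s a).1 s') with hps | hps
          · rw [← hps, zero_mul]
          have := hsc s' (Finset.mem_univ s')
          rcases mul_eq_zero.1 this with h' | h'
          · exact absurd h' hps.ne'
          · rw [h', mul_zero]
        have hga : g (n+1) s a = 0 := by
          simp only [hg]
          rw [hVs, if_pos (le_trans (hQle (n+1) s a) (le_of_eq hQval0))]
        rw [hga, zero_add]
        have : ∑ s', P s a s' * EV P π g n s' = 0 := by
          apply Finset.sum_eq_zero
          intro s' _
          rcases eq_or_lt_of_le ((hP s a).1 s') with hps | hps
          · rw [← hps, zero_mul]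
          have hEVcs' : EV P π c n s' = 0 := by
            have := hsc s' (Finset.mem_univ s')
            rcases mul_eq_zero.1 this with h' | h'
            · exact absurd h' hps.ne'
            · exact h'
          have hVs' : Vstar n s' = 0 :=
            le_antisymm (hEVcs' ▸ hVle n s') (hVnn n s')
          rw [(ih s' hVs').2 hEVcs', mul_zero]
        rw [this, mul_zero]
end

section
/- For any primal-dual sequence {(π^k, λ^k)}_{k=1}^K, the total constraint violation satisfies ∑_{k=1}^K V_c^{π^k}(s₁^k) ≤ R_p({π^k}, π*) + R_d({λ^k}, λ*), where λ* = λ̂ + 1 and (π*, λ̂) is a common saddle-point with V_c^{π*}(s₁^k) = 0 for all k. -/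
open Finset

/-- Episode-`k` Lagrangian `ℒ^k(π, λ) = V_r^π(s₁^k) − λ(s₁^k)·V_c^π(s₁^k)`. -/
def Lag {S Policy : Type*} (Vr Vc : Policy → S → ℝ) {K : ℕ}
    (s1 : Fin K → S) (k : Fin K) (π : Policy) (lam : S → ℝ) : ℝ :=
  Vr π (s1 k) - lam (s1 k) * Vc π (s1 k)

/-- Primal regret `R_p({π^k}, π_c) = ∑_k (ℒ^k(π_c, λ^k) − ℒ^k(π^k, λ^k))`. -/
def Rp {S Policy : Type*} (Vr Vc : Policy → S → ℝ) {K : ℕ}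
    (s1 : Fin K → S) (pik : Fin K → Policy) (lamk : Fin K → S → ℝ)
    (πc : Policy) : ℝ :=
  ∑ k, (Lag Vr Vc s1 k πc (lamk k) - Lag Vr Vc s1 k (pik k) (lamk k))

/-- Dual regret `R_d({λ^k}, λ_c) = ∑_k (ℒ^k(π^k, λ^k) − ℒ^k(π^k, λ_c))`. -/
def Rd {S Policy : Type*} (Vr Vc : Policy → S → ℝ) {K : ℕ}
    (s1 : Fin K → S) (pik : Fin K → Policy) (lamk : Fin K → S → ℝ)
    (lamc : S → ℝ) : ℝ :=
  ∑ k, (Lag Vr Vc s1 k (pik k) (lamk k) - Lag Vr Vc s1 k (pik k) lamc)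

/-- Total constraint violation bound:
`∑_k V_c^{π^k}(s₁^k) ≤ R_p({π^k}, π*) + R_d({λ^k}, λ̂ + 1)`, where `(π*, λ̂)` is a
common saddle-point with `V_c^{π*}(s₁^k) = 0` for all `k`. -/
theorem total_violation_le_regret_sum
    {S Policy : Type*} (Vr Vc : Policy → S → ℝ) {K : ℕ}
    (s1 : Fin K → S) (pik : Fin K → Policy) (lamk : Fin K → S → ℝ)
    (πstar : Policy) (lamhat : S → ℝ)
    (hlamhat : ∀ s, 0 ≤ lamhat s) (hlamk : ∀ k s, 0 ≤ lamk k s)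
    (hVc0 : ∀ k, Vc πstar (s1 k) = 0)
    (hVc_nonneg : ∀ (π : Policy) (s : S), 0 ≤ Vc π s)
    (hsaddle : ∀ (k : Fin K) (π : Policy),
      Lag Vr Vc s1 k π lamhat ≤ Lag Vr Vc s1 k πstar lamhat) :
    ∑ k, Vc (pik k) (s1 k) ≤
      Rp Vr Vc s1 pik lamk πstar +
        Rd Vr Vc s1 pik lamk (fun s => lamhat s + 1) := by
  rw [Rp, Rd, ← Finset.sum_add_distrib]
  apply Finset.sum_le_sum
  intro k _
  have hs := hsaddle k (pik k)
  simp only [Lag, hVc0 k, mul_zero, sub_zero] at *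
  have h1 := hlamhat (s1 k)
  have h2 := hVc_nonneg (pik k) (s1 k)
  nlinarith
end

section
/- Online projected gradient descent on a bounded closed convex set with diameter at most D, against convex losses with subgradient norms at most G, using step sizes η_k = D/(G√k), guarantees for all K ≥ 1 that ∑_{k=1}^K f_k(x^k) − min_{x* ∈ 𝒦} ∑_{k=1}^K f_k(x*) ≤ 1.5·G·D·√K. -/
open Finset

private lemma sum_inv_sqrt_le (K : ℕ) :
    ∑ k ∈ Finset.Icc 1 K, 1 / Real.sqrt k ≤ 2 * Real.sqrt K := by
  induction K with
  | zero => simp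
  | succ n ih =>
    rw [Finset.sum_Icc_succ_top (by omega)]
    have hs : Real.sqrt n ^ 2 = n := Real.sq_sqrt (by positivity)
    have ht : Real.sqrt (n + 1 : ℕ) ^ 2 = (n + 1 : ℕ) := Real.sq_sqrt (by positivity)
    have htpos : 0 < Real.sqrt (n + 1 : ℕ) := Real.sqrt_pos.mpr (by positivity)
    have hsnn : 0 ≤ Real.sqrt n := Real.sqrt_nonneg _
    have key : 1 / Real.sqrt (n + 1 : ℕ) ≤
        2 * Real.sqrt (n + 1 : ℕ) - 2 * Real.sqrt n := by
      rw [div_le_iff₀ htpos]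
      have h2 : 2 * Real.sqrt n * Real.sqrt (n + 1 : ℕ) ≤ 2 * (n : ℝ) + 1 := by
        nlinarith [sq_nonneg (Real.sqrt (n + 1 : ℕ) - Real.sqrt n),
          Nat.cast_succ (R := ℝ) n]
      push_cast at ht ⊢
      push_cast at h2
      nlinarith
    linarith

set_option maxHeartbeats 1000000 in
/-- Online projected gradient descent on a bounded closed convex set
of diameter at most `D`, against convex losses with subgradient norms at most `G`,
with step sizes `η_k = D/(G√k)`, guarantees for all `K ≥ 1` that
`∑_{k=1}^K f_k(x^k) − min_{x* ∈ 𝒦} ∑_{k=1}^K f_k(x*) ≤ 1.5·G·D·√K`. -/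
theorem online_projected_gradient_descent_regret
    (d : ℕ) (𝒦 : Set (EuclideanSpace ℝ (Fin d)))
    (hconv : Convex ℝ 𝒦) (hclosed : IsClosed 𝒦) (hne : 𝒦.Nonempty)
    (hbdd : Bornology.IsBounded 𝒦)
    (D G : ℝ) (hD : 0 < D) (hG : 0 < G)
    (hdiam : ∀ x ∈ 𝒦, ∀ y ∈ 𝒦, ‖x - y‖ ≤ D)
    (f : ℕ → EuclideanSpace ℝ (Fin d) → ℝ)
    (x g : ℕ → EuclideanSpace ℝ (Fin d))
    (hx : ∀ k, x k ∈ 𝒦)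
    (hconvf : ∀ k, ConvexOn ℝ 𝒦 (f k))
    (hsub : ∀ k, ∀ y ∈ 𝒦, f k (x k) + (inner ℝ (g k) (y - x k) : ℝ) ≤ f k y)
    (hgnorm : ∀ k, ‖g k‖ ≤ G)
    (η : ℕ → ℝ) (hη : ∀ k, 1 ≤ k → η k = D / (G * Real.sqrt k))
    (hupdate : ∀ k, 1 ≤ k →
      x (k + 1) ∈ 𝒦 ∧
        ∀ y ∈ 𝒦, ‖x (k + 1) - (x k - η k • g k)‖ ≤ ‖y - (x k - η k • g k)‖) :
    ∀ K : ℕ, 1 ≤ K → ∀ xstar ∈ 𝒦,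
      ∑ k ∈ Finset.Icc 1 K, (f k (x k) - f k xstar) ≤
        1.5 * G * D * Real.sqrt K := by
  intro K hK xstar hxstar
  haveI : Nonempty 𝒦 := ⟨⟨xstar, hxstar⟩⟩
  set a : ℕ → ℝ := fun k => ‖x k - xstar‖ ^ 2 with ha
  -- positivity of step sizes
  have hsqrtpos : ∀ k : ℕ, 1 ≤ k → (0 : ℝ) < Real.sqrt k := fun k hk =>
    Real.sqrt_pos.mpr (by exact_mod_cast Nat.pos_of_ne_zero (by omega))
  have hηpos : ∀ k : ℕ, 1 ≤ k → 0 < η k := by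
    intro k hk
    rw [hη k hk]
    exact div_pos hD (mul_pos hG (hsqrtpos k hk))
  -- diameter bound on a
  have haD : ∀ k, a k ≤ D ^ 2 := by
    intro k
    have h := hdiam (x k) (hx k) xstar hxstar
    have hn : (0:ℝ) ≤ ‖x k - xstar‖ := norm_nonneg _
    show ‖x k - xstar‖ ^ 2 ≤ D ^ 2
    nlinarith
  have hann : ∀ k, 0 ≤ a k := fun k => sq_nonneg _
  -- per-step inequality
  have step : ∀ k : ℕ, 1 ≤ k →
      f k (x k) - f k xstar ≤ (a k - a (k + 1)) / (2 * η k) + η k * G ^ 2 / 2 := by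
    intro k hk
    obtain ⟨hmem, hproj⟩ := hupdate k hk
    set p : EuclideanSpace ℝ (Fin d) := x k - η k • g k with hp
    -- x (k+1) achieves the infimum of distance to p over 𝒦
    have hinf : ‖p - x (k + 1)‖ = ⨅ w : 𝒦, ‖p - w‖ := by
      have hbdd' : BddBelow (Set.range fun w : 𝒦 => ‖p - (w : EuclideanSpace ℝ (Fin d))‖) :=
        ⟨0, by rintro _ ⟨w, rfl⟩; exact norm_nonneg _⟩
      refine le_antisymm (le_ciInf fun w => ?_) (ciInf_le hbdd' (⟨x (k + 1), hmem⟩ : 𝒦))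
      have := hproj w w.2
      calc ‖p - x (k + 1)‖ = ‖x (k + 1) - p‖ := norm_sub_rev _ _
        _ ≤ ‖(w : EuclideanSpace ℝ (Fin d)) - p‖ := this
        _ = ‖p - w‖ := norm_sub_rev _ _
    have hVI : (inner ℝ (p - x (k + 1)) (xstar - x (k + 1)) : ℝ) ≤ 0 :=
      ((norm_eq_iInf_iff_real_inner_le_zero hconv hmem).mp hinf) xstar hxstar
    -- contraction: a (k+1) ≤ ‖p - xstar‖ ^ 2
    have hcontr : a (k + 1) ≤ ‖p - xstar‖ ^ 2 := by
      have hexp : ‖p - xstar‖ ^ 2 =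
          ‖p - x (k + 1)‖ ^ 2 - 2 * (inner ℝ (p - x (k+1)) (xstar - x (k+1)) : ℝ)
            + ‖x (k + 1) - xstar‖ ^ 2 := by
        have h1 := norm_sub_sq_real (p - x (k + 1)) (xstar - x (k + 1))
        have h2 : (p - x (k+1)) - (xstar - x (k+1)) = p - xstar := by abel
        rw [h2] at h1
        have h3 : ‖xstar - x (k + 1)‖ = ‖x (k + 1) - xstar‖ := norm_sub_rev _ _
        rw [h3] at h1
        linarith [h1]
      have := sq_nonneg ‖p - x (k + 1)‖
      simp only [ha]
      nlinarith
    -- expand ‖p - xstar‖^2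
    have hexp2 : ‖p - xstar‖ ^ 2 =
        a k - 2 * η k * (inner ℝ (g k) (x k - xstar) : ℝ) + η k ^ 2 * ‖g k‖ ^ 2 := by
      have h1 : p - xstar = (x k - xstar) - η k • g k := by rw [hp]; abel
      rw [h1, norm_sub_sq_real]
      rw [real_inner_smul_right, norm_smul, real_inner_comm]
      simp only [ha, Real.norm_eq_abs, mul_pow, sq_abs]
      ring
    -- bound the inner product
    have hηk := hηpos k hk
    have hg2 : ‖g k‖ ^ 2 ≤ G ^ 2 := by
      have := hgnorm k
      have := norm_nonneg (g k)
      nlinarith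
    have hg2' : η k ^ 2 * ‖g k‖ ^ 2 ≤ η k ^ 2 * G ^ 2 :=
      mul_le_mul_of_nonneg_left hg2 (sq_nonneg _)
    have hip : 2 * η k * (inner ℝ (g k) (x k - xstar) : ℝ) ≤
        (a k - a (k + 1)) + η k ^ 2 * G ^ 2 := by
      nlinarith [hcontr, hexp2]
    have h2η : (0:ℝ) < 2 * η k := by linarith
    have heq : (a k - a (k + 1)) / (2 * η k) + η k * G ^ 2 / 2
          - (inner ℝ (g k) (x k - xstar) : ℝ)
        = ((a k - a (k + 1)) + η k ^ 2 * G ^ 2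
            - 2 * η k * (inner ℝ (g k) (x k - xstar) : ℝ)) / (2 * η k) := by
      field_simp
    have hnum : (0:ℝ) ≤ ((a k - a (k + 1)) + η k ^ 2 * G ^ 2
        - 2 * η k * (inner ℝ (g k) (x k - xstar) : ℝ)) / (2 * η k) :=
      div_nonneg (by linarith) (le_of_lt h2η)
    have hip2 : (inner ℝ (g k) (x k - xstar) : ℝ) ≤
        (a k - a (k + 1)) / (2 * η k) + η k * G ^ 2 / 2 := by linarith [heq ▸ hnum]
    -- subgradient inequality
    have hsg := hsub k xstar hxstar
    have hinner : (inner ℝ (g k) (xstar - x k) : ℝ) = - (inner ℝ (g k) (x k - xstar) : ℝ) := by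
      have : xstar - x k = -(x k - xstar) := by abel
      rw [this, inner_neg_right]
    rw [hinner] at hsg
    linarith
  -- main induction
  have main : ∀ K : ℕ, 1 ≤ K →
      ∑ k ∈ Finset.Icc 1 K, (f k (x k) - f k xstar) ≤
        D ^ 2 / (2 * η K) - a (K + 1) / (2 * η K)
          + (G ^ 2 / 2) * ∑ k ∈ Finset.Icc 1 K, η k := by
    intro K hK
    induction K with
    | zero => omega
    | succ n ih =>
      rcases Nat.eq_or_lt_of_le hK with h1 | h1
      · -- base case n + 1 = 1
        have hn : n = 0 := by omega
        subst hn
        simp only [Finset.Icc_self, Finset.sum_singleton]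
        have hs := step 1 le_rfl
        have hη1 := hηpos 1 le_rfl
        have := haD 1
        have h2 : (a 1 - a 2) / (2 * η 1) ≤ D ^ 2 / (2 * η 1) - a 2 / (2 * η 1) := by
          rw [div_le_iff₀ (by positivity), sub_mul, div_mul_cancel₀ _ (by positivity),
            div_mul_cancel₀ _ (by positivity)]
          linarith
        norm_num at hs h2 ⊢
        linarith
      · -- inductive step, n ≥ 1
        have hn : 1 ≤ n := by omega
        have ihn := ih hn
        rw [Finset.sum_Icc_succ_top (by omega : 1 ≤ n + 1),
          Finset.sum_Icc_succ_top (by omega : 1 ≤ n + 1)]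
        have hs := step (n + 1) (by omega)
        have hηn := hηpos n hn
        have hηn1 := hηpos (n + 1) (by omega)
        -- η is nonincreasing: η (n+1) ≤ η n
        have hmono : η (n + 1) ≤ η n := by
          rw [hη n hn, hη (n + 1) (by omega)]
          apply div_le_div_of_nonneg_left (le_of_lt hD) (mul_pos hG (hsqrtpos n hn))
          apply mul_le_mul_of_nonneg_left _ (le_of_lt hG)
          exact Real.sqrt_le_sqrt (by exact_mod_cast Nat.le_succ n)
        have key : D ^ 2 / (2 * η n) - a (n + 1) / (2 * η n) + a (n + 1) / (2 * η (n + 1))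
            ≤ D ^ 2 / (2 * η (n + 1)) := by
          have h1 : (D ^ 2 - a (n + 1)) * (1 / (2 * η (n + 1)) - 1 / (2 * η n)) ≥ 0 := by
            apply mul_nonneg
            · linarith [haD (n + 1)]
            · have : 1 / (2 * η n) ≤ 1 / (2 * η (n + 1)) := by
                apply one_div_le_one_div_of_le (by positivity)
                linarith
              linarith
          have e1 : D ^ 2 / (2 * η n) = D ^ 2 * (1 / (2 * η n)) := by ring
          have e2 : a (n + 1) / (2 * η n) = a (n + 1) * (1 / (2 * η n)) := by ring
          have e3 : a (n + 1) / (2 * η (n + 1)) = a (n + 1) * (1 / (2 * η (n + 1))) := by ring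
          have e4 : D ^ 2 / (2 * η (n + 1)) = D ^ 2 * (1 / (2 * η (n + 1))) := by ring
          rw [e1, e2, e3, e4]
          nlinarith
        have hform : (a (n + 1) - a (n + 2)) / (2 * η (n + 1))
            = a (n + 1) / (2 * η (n + 1)) - a (n + 2) / (2 * η (n + 1)) := by ring
        rw [hform] at hs
        have : f (n + 1) (x (n + 1)) - f (n + 1) xstar ≤
            a (n + 1) / (2 * η (n + 1)) - a (n + 2) / (2 * η (n + 1))
              + η (n + 1) * G ^ 2 / 2 := hs
        calc ∑ k ∈ Finset.Icc 1 n, (f k (x k) - f k xstar)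
              + (f (n + 1) (x (n + 1)) - f (n + 1) xstar)
            ≤ (D ^ 2 / (2 * η n) - a (n + 1) / (2 * η n)
                + (G ^ 2 / 2) * ∑ k ∈ Finset.Icc 1 n, η k)
              + (a (n + 1) / (2 * η (n + 1)) - a (n + 2) / (2 * η (n + 1))
                + η (n + 1) * G ^ 2 / 2) := by linarith
          _ ≤ D ^ 2 / (2 * η (n + 1)) - a (n + 1 + 1) / (2 * η (n + 1))
              + (G ^ 2 / 2) * (∑ k ∈ Finset.Icc 1 n, η k + η (n + 1)) := by
            have hnn : a (n + 2) = a (n + 1 + 1) := rfl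
            rw [hnn] at hs
            linarith [key, hs]
  -- conclude
  have hmain := main K hK
  have hsK := hsqrtpos K hK
  have hηK := hηpos K hK
  -- D^2/(2 η K) = G * D * sqrt K / 2
  have h1 : D ^ 2 / (2 * η K) = G * D * Real.sqrt K / 2 := by
    rw [hη K hK]
    field_simp
  -- sum of step sizes
  have h2 : ∑ k ∈ Finset.Icc 1 K, η k ≤ (D / G) * (2 * Real.sqrt K) := by
    have e : ∑ k ∈ Finset.Icc 1 K, η k
        = (D / G) * ∑ k ∈ Finset.Icc 1 K, 1 / Real.sqrt k := by
      rw [Finset.mul_sum]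
      apply Finset.sum_congr rfl
      intro k hk
      rw [hη k (Finset.mem_Icc.mp hk).1]
      ring
    rw [e]
    exact mul_le_mul_of_nonneg_left (sum_inv_sqrt_le K) (by positivity)
  have h3 : 0 ≤ a (K + 1) / (2 * η K) := div_nonneg (hann _) (by positivity)
  calc ∑ k ∈ Finset.Icc 1 K, (f k (x k) - f k xstar)
      ≤ D ^ 2 / (2 * η K) - a (K + 1) / (2 * η K)
          + (G ^ 2 / 2) * ∑ k ∈ Finset.Icc 1 K, η k := hmain
    _ ≤ G * D * Real.sqrt K / 2 + (G ^ 2 / 2) * ((D / G) * (2 * Real.sqrt K)) := by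
        rw [h1] at *
        have hGG : 0 < G ^ 2 / 2 := by positivity
        nlinarith [h2, h3]
    _ = 1.5 * G * D * Real.sqrt K := by field_simp; ring
end
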